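/- Let (Ω,μ) be a finite measure space, a, b : Ω → ℝ measurable with b > 0 a.e., and suppose ∫ a²/b dμ ≤ C and ∫ b·log b dμ ≤ C. Then there exists a constant c depending only on C and μ(Ω) such that ∫ |a|·log^{1/2}(1 + |a|) dμ ≤ c. -/

import Mathlib

open Real MeasureTheory

lemma aux_sub_one_le_mul_log (y : ℝ) (hy : 0 < y) : y - 1 ≤ y * Real.log y := by
  have h := Real.log_le_sub_one_of_pos (show (0:ℝ) < y⁻¹ by positivity)
  rw [Real.log_inv] at h
  have hy1 : y * y⁻¹ = 1 := mul_inv_cancel₀ hy.ne'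
  nlinarith [mul_le_mul_of_nonneg_left h hy.le]

lemma aux_log_one_add_le_two_sqrt (t : ℝ) (ht : 0 ≤ t) :
    Real.log (1 + t) ≤ 2 * Real.sqrt t := by
  have hs : 0 ≤ Real.sqrt t := Real.sqrt_nonneg t
  rcases le_or_gt t 1 with h | h
  · have h1 : Real.log (1 + t) ≤ t := by
      have := Real.log_le_sub_one_of_pos (show (0:ℝ) < 1 + t by linarith)
      linarith
    have h2 : t ≤ Real.sqrt t := by
      nlinarith [Real.sq_sqrt ht]
    linarith
  · have hs1 : 1 ≤ Real.sqrt t := by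
      nlinarith [Real.sq_sqrt ht]
    have h1 : Real.log (1 + t) ≤ Real.log (2 * t) :=
      Real.log_le_log (by linarith) (by linarith)
    rw [Real.log_mul two_ne_zero (by linarith)] at h1
    have h2 : Real.log t = 2 * Real.log (Real.sqrt t) := by
      rw [Real.log_sqrt ht]; ring
    have h3 : Real.log (Real.sqrt t) ≤ Real.sqrt t - 1 :=
      Real.log_le_sub_one_of_pos (by linarith)
    have h4 : Real.log 2 ≤ 1 := by
      have := Real.log_le_sub_one_of_pos (show (0:ℝ) < 2 by norm_num); linarith
    linarith

lemma aux_mul_log_one_add (b : ℝ) (hb : 0 < b) :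
    b * Real.log (1 + b) ≤ b * Real.log b + Real.log 2 * b + Real.log 2 + 1 := by
  have hlog2 : 0 < Real.log 2 := Real.log_pos one_lt_two
  rcases le_or_gt 1 b with h | h
  · have h1 : Real.log (1 + b) ≤ Real.log (2 * b) :=
      Real.log_le_log (by linarith) (by linarith)
    rw [Real.log_mul two_ne_zero (by linarith)] at h1
    have := mul_le_mul_of_nonneg_left h1 hb.le
    nlinarith
  · have h1 : Real.log (1 + b) ≤ Real.log 2 := Real.log_le_log (by linarith) (by linarith)
    have h2 : 0 ≤ Real.log (1 + b) := Real.log_nonneg (by linarith)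
    have h3 : b * Real.log (1 + b) ≤ Real.log 2 := by nlinarith
    have h4 : -1 ≤ b * Real.log b := by nlinarith [aux_sub_one_le_mul_log b hb]
    nlinarith

/-- Key pointwise bound. -/
lemma aux_key (a b : ℝ) (hb : 0 < b) :
    |a| * Real.sqrt (Real.log (1 + |a|)) ≤
      (3/2) * (a ^ 2 / b) + b * Real.log b + Real.log 2 * b + (Real.log 2 + 2) := by
  set t := |a| with ht_def
  have ht : 0 ≤ t := abs_nonneg a
  set L := Real.log (1 + t) with hL_def
  have hL : 0 ≤ L := Real.log_nonneg (by linarith)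
  have hat : a ^ 2 = t ^ 2 := (sq_abs a).symm
  -- Young step
  have step1 : t * Real.sqrt L ≤ a ^ 2 / (2 * b) + b * L / 2 := by
    have h2b : (0:ℝ) < 2 * b := by linarith
    have hmul : 2 * b * (t * Real.sqrt L) ≤ a ^ 2 + b ^ 2 * L := by
      nlinarith [sq_nonneg (t - b * Real.sqrt L), Real.sq_sqrt hL, Real.sqrt_nonneg L]
    have : t * Real.sqrt L ≤ (a ^ 2 + b ^ 2 * L) / (2 * b) := by
      rw [le_div_iff₀ h2b]; nlinarith
    have heq : (a ^ 2 + b ^ 2 * L) / (2 * b) = a ^ 2 / (2 * b) + b * L / 2 := by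
      field_simp
    linarith [heq ▸ this]
  -- bound on b * L
  have hbound2 : 0 ≤ 2 * (b * Real.log b) + 2 * Real.log 2 * b + 2 * Real.log 2 + 2 := by
    have h1 := aux_mul_log_one_add b hb
    have h2 : 0 ≤ b * Real.log (1 + b) :=
      mul_nonneg hb.le (Real.log_nonneg (by linarith))
    linarith
  have hbound1 : 0 ≤ 2 + 2 * (a ^ 2 / b) := by positivity
  have step2 : b * L ≤ (2 + 2 * (a ^ 2 / b)) +
      (2 * (b * Real.log b) + 2 * Real.log 2 * b + 2 * Real.log 2 + 2) := by
    rcases le_or_gt t (b ^ 2) with h | h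
    · -- small a case
      have h1 : L ≤ Real.log ((1 + b) ^ 2) :=
        Real.log_le_log (by linarith) (by nlinarith)
      rw [Real.log_pow] at h1
      push_cast at h1
      have h2 : b * L ≤ b * (2 * Real.log (1 + b)) :=
        mul_le_mul_of_nonneg_left (by linarith) hb.le
      have h3 := aux_mul_log_one_add b hb
      nlinarith
    · -- large a case
      set s := Real.sqrt t with hs_def
      have hs2 : s ^ 2 = t := Real.sq_sqrt ht
      have hs0 : 0 ≤ s := Real.sqrt_nonneg t
      have hbs : b ≤ s := by nlinarith
      have hL2 : L ≤ 2 * s := aux_log_one_add_le_two_sqrt t ht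
      have h1 : b * L ≤ 2 * t := by nlinarith
      have h2 : t ≤ 1 + a ^ 2 / b := by
        rcases le_or_gt t 1 with h' | h'
        · have : 0 ≤ a ^ 2 / b := by positivity
          linarith
        · have hs1 : 1 < s := by nlinarith
          have hsp : 0 < s := by linarith
          have hd : a ^ 2 / s ≤ a ^ 2 / b :=
            div_le_div_of_nonneg_left (sq_nonneg a) hb hbs
          have : t ≤ a ^ 2 / s := by
            rw [le_div_iff₀ hsp]; nlinarith
          linarith
      linarith
  calc |a| * Real.sqrt (Real.log (1 + |a|)) = t * Real.sqrt L := rfl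
    _ ≤ a ^ 2 / (2 * b) + b * L / 2 := step1
    _ ≤ (3/2) * (a ^ 2 / b) + b * Real.log b + Real.log 2 * b + (Real.log 2 + 2) := by
        have : a ^ 2 / (2 * b) = (1/2) * (a ^ 2 / b) := by ring
        linarith

/-- Lemma 2.5 (single-function version): on a finite measure space, if
`∫ a²/b ≤ C` and `∫ b log b ≤ C` (with `b > 0` a.e.), then
`∫ |a| log^{1/2}(1 + |a|)` is finite and bounded by a constant depending only on
`C` and the total mass `μ(Ω) ≤ M`. -/
theorem stmt12 (C M : ℝ) :
    ∃ c : ℝ,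
      ∀ (Ω : Type) (_ : MeasurableSpace Ω) (μ : Measure Ω),
        IsFiniteMeasure μ → μ Set.univ ≤ ENNReal.ofReal M →
        ∀ a b : Ω → ℝ, Measurable a → Measurable b →
          (∀ᵐ x ∂μ, 0 < b x) →
          Integrable (fun x => (a x) ^ 2 / b x) μ →
          Integrable (fun x => b x * Real.log (b x)) μ →
          (∫ x, (a x) ^ 2 / b x ∂μ) ≤ C →
          (∫ x, b x * Real.log (b x) ∂μ) ≤ C →
          Integrable (fun x => |a x| * Real.sqrt (Real.log (1 + |a x|))) μ ∧
          (∫ x, |a x| * Real.sqrt (Real.log (1 + |a x|)) ∂μ) ≤ c := by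
  refine ⟨(3/2) * C + C + Real.log 2 * (C + max M 0) + (Real.log 2 + 2) * max M 0, ?_⟩
  intro Ω _ μ hfin hM a b ha hb hbpos hInt1 hInt2 hC1 hC2
  have hlog2 : 0 < Real.log 2 := Real.log_pos one_lt_two
  set MΩ : ℝ := (μ Set.univ).toReal with hMΩ_def
  have hMΩ0 : 0 ≤ MΩ := ENNReal.toReal_nonneg
  have hMΩ : MΩ ≤ max M 0 := by
    have h1 : MΩ ≤ (ENNReal.ofReal M).toReal :=
      ENNReal.toReal_mono ENNReal.ofReal_ne_top hM
    rwa [ENNReal.toReal_ofReal'] at h1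
  -- integrability of b
  have hb_int : Integrable b μ := by
    refine Integrable.mono' (g := fun x => |b x * Real.log (b x)| + 1)
      (hInt2.abs.add (integrable_const 1)) hb.aestronglyMeasurable ?_
    filter_upwards [hbpos] with x hx
    have h1 := aux_sub_one_le_mul_log (b x) hx
    have h2 := le_abs_self (b x * Real.log (b x))
    rw [Real.norm_eq_abs, abs_of_pos hx]
    linarith
  -- ∫ b ≤ C + MΩ
  have hbC : ∫ x, b x ∂μ ≤ C + MΩ := by
    have h1 : ∫ x, b x ∂μ ≤ ∫ x, (b x * Real.log (b x) + 1) ∂μ := by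
      refine integral_mono_ae hb_int (hInt2.add (integrable_const 1)) ?_
      filter_upwards [hbpos] with x hx
      have := aux_sub_one_le_mul_log (b x) hx
      show b x ≤ b x * Real.log (b x) + 1
      linarith
    rw [integral_add hInt2 (integrable_const 1), integral_const, smul_eq_mul, mul_one, measureReal_def, ← hMΩ_def] at h1
    linarith
  -- measurability of f
  set f : Ω → ℝ := fun x => |a x| * Real.sqrt (Real.log (1 + |a x|)) with hf_def
  have hf_meas : Measurable f := by
    apply ha.abs.mul
    exact Real.continuous_sqrt.measurable.comp
      (Real.measurable_log.comp (measurable_const.add ha.abs))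
  -- pointwise bound function
  set P : Ω → ℝ := fun x =>
    (3/2) * (a x ^ 2 / b x) + b x * Real.log (b x) + Real.log 2 * b x + (Real.log 2 + 2)
    with hP_def
  have hP_int : Integrable P μ :=
    (((hInt1.const_mul (3/2)).add hInt2).add (hb_int.const_mul (Real.log 2))).add
      (integrable_const _)
  have hfP : ∀ᵐ x ∂μ, f x ≤ P x := by
    filter_upwards [hbpos] with x hx
    exact aux_key (a x) (b x) hx
  -- integrability of f
  have hf_int : Integrable f μ := by
    refine Integrable.mono' (g := fun x =>
        (3/2) * (a x ^ 2 / b x) + |b x * Real.log (b x)| + Real.log 2 * b x + (Real.log 2 + 2))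
      ((((hInt1.const_mul (3/2)).add hInt2.abs).add (hb_int.const_mul (Real.log 2))).add
        (integrable_const _)) hf_meas.aestronglyMeasurable ?_
    filter_upwards [hbpos] with x hx
    have h1 := aux_key (a x) (b x) hx
    have h2 := le_abs_self (b x * Real.log (b x))
    have h3 : 0 ≤ f x := mul_nonneg (abs_nonneg _) (Real.sqrt_nonneg _)
    rw [Real.norm_eq_abs, abs_of_nonneg h3]
    simp only [hf_def] at *
    linarith
  refine ⟨hf_int, ?_⟩
  have hIP : ∫ x, f x ∂μ ≤ ∫ x, P x ∂μ := integral_mono_ae hf_int hP_int hfP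
  have hPval : ∫ x, P x ∂μ =
      (3/2) * (∫ x, a x ^ 2 / b x ∂μ) + (∫ x, b x * Real.log (b x) ∂μ)
        + Real.log 2 * (∫ x, b x ∂μ) + (Real.log 2 + 2) * MΩ := by
    have H1 : Integrable (fun x => (3:ℝ)/2 * (a x ^ 2 / b x)) μ := hInt1.const_mul _
    have H3 : Integrable (fun x => Real.log 2 * b x) μ := hb_int.const_mul _
    have H12 : Integrable
        (fun x => (3:ℝ)/2 * (a x ^ 2 / b x) + b x * Real.log (b x)) μ := H1.add hInt2
    have H123 : Integrable
        (fun x => (3:ℝ)/2 * (a x ^ 2 / b x) + b x * Real.log (b x) + Real.log 2 * b x) μ :=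
      H12.add H3
    rw [show ∫ x, P x ∂μ = ∫ x, ((3:ℝ)/2 * (a x ^ 2 / b x) + b x * Real.log (b x)
        + Real.log 2 * b x) + (Real.log 2 + 2) ∂μ from rfl,
      integral_add H123 (integrable_const _),
      integral_add H12 H3,
      integral_add H1 hInt2,
      integral_const_mul, integral_const_mul, integral_const, smul_eq_mul, measureReal_def, ← hMΩ_def]
    ring
  have h4 : Real.log 2 * (∫ x, b x ∂μ) ≤ Real.log 2 * (C + max M 0) :=
    mul_le_mul_of_nonneg_left (by linarith) hlog2.le
  have h5 : (Real.log 2 + 2) * MΩ ≤ (Real.log 2 + 2) * max M 0 :=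
    mul_le_mul_of_nonneg_left hMΩ (by linarith)
  calc ∫ x, f x ∂μ ≤ ∫ x, P x ∂μ := hIP
    _ = _ := hPval
    _ ≤ (3/2) * C + C + Real.log 2 * (C + max M 0) + (Real.log 2 + 2) * max M 0 := by
        linarith
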